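/- arXiv:1008.2386 — 7 statements merged into one kernel-verified Lean document; each statement's English description precedes it below -/
import Mathlib

section
/- Let X be an n×n complex Hermitian positive semidefinite matrix. Then det(I_n + X) is a real number at least 1, the trace of X is a nonnegative real number, and log(det(I_n + X)) ≤ tr(X) (taking real parts, which equal the quantities themselves). Moreover, equality log(det(I_n + X)) = tr(X) holds if and only if X = 0. -/
open Matrix
open scoped ComplexOrder

/-- For an `n × n` complex Hermitian positive semidefinite matrix `X`:
`det (I + X)` is a real number at least `1`, `tr X` is a nonnegative real number,
`log (det (I + X)) ≤ tr X` (taking real parts), and equality holds iff `X = 0`. -/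
theorem logdet_le_trace_of_posSemidef {n : Type*} [Fintype n] [DecidableEq n]
    (X : Matrix n n ℂ) (hX : X.PosSemidef) :
    ((1 + X).det).im = 0 ∧ 1 ≤ ((1 + X).det).re ∧
    (X.trace).im = 0 ∧ 0 ≤ (X.trace).re ∧
    Real.log ((1 + X).det).re ≤ (X.trace).re ∧
    (Real.log ((1 + X).det).re = (X.trace).re ↔ X = 0) := by
  have hH := hX.1
  have hμ : ∀ i, 0 ≤ hH.eigenvalues i := hX.eigenvalues_nonneg
  have hU := (Matrix.mem_unitaryGroup_iff).mp hH.eigenvectorUnitary.2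
  have hU' := (Matrix.mem_unitaryGroup_iff').mp hH.eigenvectorUnitary.2
  have h1 : (1 + X) = (hH.eigenvectorUnitary : Matrix n n ℂ) *
      diagonal (fun i => 1 + (hH.eigenvalues i : ℂ)) *
      star (hH.eigenvectorUnitary : Matrix n n ℂ) := by
    have : diagonal (fun i => 1 + (hH.eigenvalues i : ℂ)) =
        1 + diagonal (RCLike.ofReal ∘ hH.eigenvalues) := by
      rw [← diagonal_one, ← diagonal_add]
      congr 1
    rw [this, mul_add, add_mul, mul_one, hU, ← Unitary.conjStarAlgAut_apply (S := ℂ), ← hH.spectral_theorem]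
  have hdet : (1 + X).det = ((∏ i, (1 + hH.eigenvalues i) : ℝ) : ℂ) := by
    rw [h1, det_mul_right_comm, hU, one_mul, det_diagonal]
    push_cast
    ring
  have htr : X.trace = ((∑ i, hH.eigenvalues i : ℝ) : ℂ) := by
    conv_lhs => rw [hH.spectral_theorem, Unitary.conjStarAlgAut_apply]
    rw [trace_mul_cycle, hU', one_mul, trace_diagonal]
    push_cast
    simp [Function.comp]
  have hdre : ((1 + X).det).re = ∏ i, (1 + hH.eigenvalues i) := by
    rw [hdet, Complex.ofReal_re]
  have htre : (X.trace).re = ∑ i, hH.eigenvalues i := by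
    rw [htr, Complex.ofReal_re]
  have h1le : ∀ i ∈ Finset.univ, (1 : ℝ) ≤ 1 + hH.eigenvalues i := fun i _ => by
    linarith [hμ i]
  have hprod1 : (1 : ℝ) ≤ ∏ i, (1 + hH.eigenvalues i) := by
    calc (1:ℝ) = ∏ _i : n, 1 := by simp
    _ ≤ _ := Finset.prod_le_prod (fun i _ => zero_le_one) h1le
  have hlogle : ∀ i, Real.log (1 + hH.eigenvalues i) ≤ hH.eigenvalues i := fun i => by
    have := Real.log_le_sub_one_of_pos (x := 1 + hH.eigenvalues i) (by linarith [hμ i])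
    linarith
  have hlogprod : Real.log (∏ i, (1 + hH.eigenvalues i)) =
      ∑ i, Real.log (1 + hH.eigenvalues i) :=
    Real.log_prod (fun i _ => by have := hμ i; intro h; linarith)
  refine ⟨by rw [hdet]; exact Complex.ofReal_im _, by rw [hdre]; exact hprod1,
    by rw [htr]; exact Complex.ofReal_im _,
    by rw [htre]; exact Finset.sum_nonneg fun i _ => hμ i, ?_, ?_⟩
  · rw [hdre, htre, hlogprod]
    exact Finset.sum_le_sum fun i _ => hlogle i
  · constructor
    · intro heq
      rw [hdre, htre, hlogprod] at heq
      have hall : ∀ i ∈ Finset.univ, Real.log (1 + hH.eigenvalues i) = hH.eigenvalues i :=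
        (Finset.sum_eq_sum_iff_of_le fun i _ => hlogle i).mp heq
      have hzero : ∀ i, hH.eigenvalues i = 0 := by
        intro i
        by_contra hne
        have hpos : 0 < hH.eigenvalues i := lt_of_le_of_ne (hμ i) (Ne.symm hne)
        have := Real.log_lt_sub_one_of_pos (x := 1 + hH.eigenvalues i) (by linarith)
          (by intro h; nlinarith)
        have := hall i (Finset.mem_univ i)
        linarith
      have : X = (hH.eigenvectorUnitary : Matrix n n ℂ) *
          diagonal (RCLike.ofReal ∘ hH.eigenvalues) *
          star (hH.eigenvectorUnitary : Matrix n n ℂ) := hH.spectral_theorem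
      rw [this]
      have : diagonal (RCLike.ofReal ∘ hH.eigenvalues) = (0 : Matrix n n ℂ) := by
        ext i j
        simp [diagonal_apply, hzero]
      rw [this, mul_zero, zero_mul]
    · intro h
      subst h
      simp
end

section
/- The log-determinant function is concave on the set of n×n complex Hermitian positive definite matrices: for all Hermitian positive definite matrices A, B and all θ ∈ [0,1], the matrix θA + (1−θ)B is Hermitian positive definite and log(det(θA + (1−θ)B)) ≥ θ·log(det A) + (1−θ)·log(det B), where det of a Hermitian positive definite matrix is a positive real number (take real parts). -/
open Matrix
open scoped ComplexOrder

section LogdetAux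

variable {n : Type*} [Fintype n] [DecidableEq n]

private lemma aux_smul_posDef {A : Matrix n n ℂ} (hA : A.PosDef) {c : ℝ} (hc : 0 < c) :
    (c • A).PosDef := by
  have hcs : c • A = (c : ℂ) • A := by
    ext i j; simp [Complex.real_smul]
  rw [hcs]
  refine Matrix.PosDef.of_dotProduct_mulVec_pos ?_ fun x hx => ?_
  · unfold Matrix.IsHermitian
    rw [conjTranspose_smul, hA.1.eq]
    norm_num
  · have h := hA.dotProduct_mulVec_pos hx
    rw [smul_mulVec, dotProduct_smul, smul_eq_mul]
    exact mul_pos (by exact_mod_cast hc) h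

private lemma aux_conj_posDef {N : Matrix n n ℂ} (hN : N.PosDef) (S : Matrix n n ℂ)
    (hS : IsUnit S) : (Sᴴ * N * S).PosDef := by
  refine Matrix.PosDef.of_dotProduct_mulVec_pos ?_ fun x hx => ?_
  · unfold Matrix.IsHermitian
    simp [conjTranspose_mul, hN.1.eq, mul_assoc]
  · have hx' : S *ᵥ x ≠ 0 :=
      ((Matrix.mulVec_injective_iff_isUnit.mpr hS).ne_iff' (mulVec_zero S)).2 hx
    have h := hN.dotProduct_mulVec_pos hx'
    rwa [star_mulVec, ← dotProduct_mulVec, mulVec_mulVec, mulVec_mulVec] at h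

private lemma aux_real_smul (r : ℝ) (X : Matrix n n ℂ) : r • X = (r : ℂ) • X := by
  ext i j; simp [Complex.real_smul]

private lemma aux_det_smul_add_smul_one {M : Matrix n n ℂ} (hM : M.IsHermitian) (a c : ℝ) :
    det ((a : ℂ) • M + (c : ℂ) • 1) =
      ((∏ i, (a * hM.eigenvalues i + c) : ℝ) : ℂ) := by
  set U := (hM.eigenvectorUnitary : Matrix n n ℂ) with hUdef
  have hU : U * star U = 1 := Matrix.mem_unitaryGroup_iff.mp hM.eigenvectorUnitary.2
  have hdiag : diagonal (fun i => ((a * hM.eigenvalues i + c : ℝ) : ℂ)) =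
      (a : ℂ) • diagonal (RCLike.ofReal ∘ hM.eigenvalues) + (c : ℂ) • 1 := by
    ext i j
    by_cases h : i = j
    · subst h; simp
    · simp [diagonal_apply_ne _ h, Matrix.one_apply_ne h, h]
  have key : (a : ℂ) • M + (c : ℂ) • 1 =
      U * diagonal (fun i => ((a * hM.eigenvalues i + c : ℝ) : ℂ)) * star U := by
    rw [hdiag, Matrix.mul_add, Matrix.add_mul]
    rw [Matrix.mul_smul, Matrix.smul_mul, Matrix.mul_smul, Matrix.smul_mul]
    rw [mul_one, hU]
    conv_lhs => rw [hM.spectral_theorem, Unitary.conjStarAlgAut_apply]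
  rw [key, det_mul, det_mul, mul_right_comm, ← det_mul, hU, det_one, one_mul, det_diagonal]
  push_cast
  rfl

section LogdetSqrt

open scoped MatrixOrder

private lemma aux_sqrt {n : Type*} [Fintype n] [DecidableEq n] {B : Matrix n n ℂ}
    (hB : B.PosSemidef) : ∃ S : Matrix n n ℂ, S * S = B ∧ S.IsHermitian :=
  ⟨CFC.sqrt B, CFC.sqrt_mul_sqrt_self B hB.nonneg, (CFC.sqrt_nonneg B).posSemidef.1⟩

end LogdetSqrt

end LogdetAux

/-- Concavity of `log ∘ det` on Hermitian positive definite complex matrices: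
for PD `A`, `B` and `θ ∈ [0,1]`, the matrix `θ•A + (1-θ)•B` is Hermitian positive
definite and `log det (θ•A + (1-θ)•B) ≥ θ log det A + (1-θ) log det B`
(determinants of PD matrices are positive reals; take real parts). -/
theorem logdet_concave_posDef {n : Type*} [Fintype n] [DecidableEq n]
    (A B : Matrix n n ℂ) (hA : A.PosDef) (hB : B.PosDef)
    (θ : ℝ) (hθ0 : 0 ≤ θ) (hθ1 : θ ≤ 1) :
    (θ • A + (1 - θ) • B).PosDef ∧
    θ * Real.log A.det.re + (1 - θ) * Real.log B.det.re ≤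
      Real.log ((θ • A + (1 - θ) • B).det.re) := by
  set C := θ • A + (1 - θ) • B with hC
  have hPD : C.PosDef := by
    rcases eq_or_lt_of_le hθ0 with h0 | h0
    · have hCB : C = B := by rw [hC, ← h0]; simp
      rw [hCB]; exact hB
    rcases eq_or_lt_of_le hθ1 with h1 | h1
    · have hCA : C = A := by rw [hC, h1]; simp
      rw [hCA]; exact hA
    · exact Matrix.PosDef.add (aux_smul_posDef hA h0) (aux_smul_posDef hB (by linarith))
  refine ⟨hPD, ?_⟩
  -- square root of B
  obtain ⟨S, hS2, hSH⟩ := aux_sqrt hB.posSemidef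
  have hSdet : IsUnit S.det := by
    have hmul : S.det * S.det = B.det := by rw [← det_mul, hS2]
    have hBdet : B.det ≠ 0 := hB.det_pos.ne'
    refine isUnit_iff_ne_zero.mpr fun h => hBdet ?_
    rw [← hmul, h, mul_zero]
  have hSu : IsUnit S := (isUnit_iff_isUnit_det S).2 hSdet
  have hiSH : (S⁻¹)ᴴ = S⁻¹ := by rw [conjTranspose_nonsing_inv, hSH.eq]
  set M := S⁻¹ * A * S⁻¹ with hMdef
  have hM : M.PosDef := by
    have := aux_conj_posDef hA S⁻¹ (Matrix.isUnit_nonsing_inv_iff.mpr hSu)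
    rwa [hiSH] at this
  have h1 : S * S⁻¹ = 1 := mul_nonsing_inv S hSdet
  have h2 : S⁻¹ * S = 1 := nonsing_inv_mul S hSdet
  have hSMS : S * M * S = A := by
    calc S * (S⁻¹ * A * S⁻¹) * S = S * (S⁻¹ * (A * (S⁻¹ * S))) := by
          simp only [Matrix.mul_assoc]
      _ = A := by rw [h2, mul_one, ← Matrix.mul_assoc, h1, one_mul]
  have hkey : C = S * ((θ : ℂ) • M + ((1 - θ : ℝ) : ℂ) • 1) * S := by
    rw [Matrix.mul_add, Matrix.add_mul, Matrix.mul_smul, Matrix.smul_mul,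
      Matrix.mul_smul, Matrix.smul_mul, mul_one, hS2, hSMS, hC,
      aux_real_smul θ A, aux_real_smul (1 - θ) B]
  set μ := hM.1.eigenvalues with hμdef
  have hμpos : ∀ i, 0 < μ i := hM.eigenvalues_pos
  have hdetC : C.det = B.det * ((∏ i, (θ * μ i + (1 - θ)) : ℝ) : ℂ) := by
    rw [hkey, det_mul, det_mul, mul_right_comm, ← det_mul, hS2,
      aux_det_smul_add_smul_one hM.1 θ (1 - θ)]
  have hdetA : A.det = B.det * M.det := by
    rw [← hSMS, det_mul, det_mul, mul_right_comm, ← det_mul, hS2]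
  have hdetM : M.det = ((∏ i, μ i : ℝ) : ℂ) := by
    rw [hM.1.det_eq_prod_eigenvalues]; push_cast; rfl
  have hBim : B.det.im = 0 := by
    have := hB.det_pos
    rw [Complex.lt_def] at this
    exact this.2.symm
  have hBre : B.det = ((B.det.re : ℝ) : ℂ) := Complex.ext rfl (by simp [hBim])
  have hb : (0 : ℝ) < B.det.re := by
    have := hB.det_pos
    rw [Complex.lt_def] at this
    simpa using this.1
  have hm : (0 : ℝ) < ∏ i, μ i := Finset.prod_pos fun i _ => hμpos i
  have hppos : ∀ i, 0 < θ * μ i + (1 - θ) := by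
    intro i
    rcases eq_or_lt_of_le hθ1 with h1 | h1
    · have : θ * μ i + (1 - θ) = μ i := by rw [h1]; ring
      rw [this]; exact hμpos i
    · have : 0 ≤ θ * μ i := mul_nonneg hθ0 (hμpos i).le
      linarith
  have hp : (0 : ℝ) < ∏ i, (θ * μ i + (1 - θ)) := Finset.prod_pos fun i _ => hppos i
  have hCre : C.det.re = B.det.re * ∏ i, (θ * μ i + (1 - θ)) := by
    rw [hdetC]
    conv_lhs => rw [hBre]
    rw [← Complex.ofReal_mul, Complex.ofReal_re]
  have hAre : A.det.re = B.det.re * ∏ i, μ i := by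
    rw [hdetA, hdetM]
    conv_lhs => rw [hBre]
    rw [← Complex.ofReal_mul, Complex.ofReal_re]
  rw [hCre, hAre, Real.log_mul hb.ne' hm.ne', Real.log_mul hb.ne' hp.ne',
    Real.log_prod (fun i _ => (hμpos i).ne'),
    Real.log_prod (fun i _ => (hppos i).ne')]
  have hpt : ∀ i, θ * Real.log (μ i) ≤ Real.log (θ * μ i + (1 - θ)) := by
    intro i
    have h := ((strictConcaveOn_log_Ioi.concaveOn)).2 (Set.mem_Ioi.mpr (hμpos i))
      (Set.mem_Ioi.mpr one_pos) hθ0 (show (0:ℝ) ≤ 1 - θ by linarith)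
      (show θ + (1 - θ) = 1 by ring)
    simpa [smul_eq_mul, Real.log_one] using h
  have hsum : ∑ i, θ * Real.log (μ i) ≤ ∑ i, Real.log (θ * μ i + (1 - θ)) :=
    Finset.sum_le_sum fun i _ => hpt i
  rw [← Finset.mul_sum] at hsum
  linarith
end

section
/- First-order global over-estimator of log-determinant: for all n×n complex Hermitian positive definite matrices A and B, log(det B) ≤ log(det A) + Re(tr(A⁻¹ (B − A))), with equality when B = A. -/
open Matrix
open scoped ComplexOrder
open scoped MatrixOrder

lemma trace_eq_sum_eigenvalues_aux {n : Type*} [Fintype n] [DecidableEq n]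
    {C : Matrix n n ℂ} (h : C.IsHermitian) :
    C.trace = ∑ i, (h.eigenvalues i : ℂ) := by
  conv_lhs => rw [h.spectral_theorem]
  rw [Unitary.conjStarAlgAut_apply, Matrix.trace_mul_cycle, Unitary.coe_star_mul_self, Matrix.one_mul,
    Matrix.trace_diagonal]
  rfl

lemma posDef_conj_aux {n : Type*} [Fintype n] [DecidableEq n]
    {B M : Matrix n n ℂ} (hB : B.PosDef) (hM : IsUnit M.det) :
    (Mᴴ * B * M).PosDef := by
  refine Matrix.PosDef.of_dotProduct_mulVec_pos (Matrix.isHermitian_conjTranspose_mul_mul M hB.1) fun x hx => ?_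
  have hx' : M *ᵥ x ≠ 0 := by
    intro h
    apply hx
    have := Matrix.mulVec_injective_iff_isUnit.mpr (Matrix.isUnit_iff_isUnit_det M |>.2 hM)
    have h0 : M *ᵥ x = M *ᵥ 0 := by simpa using h
    exact this h0
  simpa only [star_mulVec, dotProduct_mulVec, vecMul_vecMul] using hB.dotProduct_mulVec_pos hx'

/-- First-order global over-estimator of `log det`: for Hermitian positive definite
complex matrices `A`, `B`, `log det B ≤ log det A + Re (tr (A⁻¹ (B - A)))`,
with equality when `B = A`. -/
theorem logdet_first_order_overestimator {n : Type*} [Fintype n] [DecidableEq n]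
    (A B : Matrix n n ℂ) (hA : A.PosDef) (hB : B.PosDef) :
    Real.log B.det.re ≤ Real.log A.det.re + ((A⁻¹ * (B - A)).trace).re ∧
    (B = A →
      Real.log B.det.re = Real.log A.det.re + ((A⁻¹ * (B - A)).trace).re) := by
  constructor
  · -- the inequality
    set S := CFC.sqrt A with hSdef
    have hS : S.PosSemidef := (CFC.sqrt_nonneg A).posSemidef
    have hSS : S * S = A := CFC.sqrt_mul_sqrt_self A hA.posSemidef.nonneg
    have hAdet : IsUnit A.det := hA.det_pos.ne'.isUnit
    have hSdetu : IsUnit S.det := by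
      have : IsUnit (S.det * S.det) := by
        rw [← Matrix.det_mul, hSS]; exact hAdet
      exact isUnit_of_mul_isUnit_left this
    have hSdet0 : S.det ≠ 0 := hSdetu.ne_zero
    have hAinv : A⁻¹ = S⁻¹ * S⁻¹ := by rw [← hSS, Matrix.mul_inv_rev]
    set C := S⁻¹ * B * S⁻¹ with hCdef
    have hSinvH : (S⁻¹).IsHermitian := hS.1.inv
    have hC : C.PosDef := by
      have hSiu : IsUnit (S⁻¹).det := by
        rw [Matrix.det_nonsing_inv, Ring.inverse_eq_inv']
        exact (inv_ne_zero hSdet0).isUnit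
      have := posDef_conj_aux hB (M := S⁻¹) hSiu
      rwa [hSinvH.eq] at this
    -- trace identity
    have htraceC : C.trace = (A⁻¹ * B).trace := by
      rw [hCdef, Matrix.trace_mul_cycle, hAinv, Matrix.mul_assoc]
    have htr : ((A⁻¹ * (B - A)).trace).re = C.trace.re - Fintype.card n := by
      have h1 : A⁻¹ * (B - A) = A⁻¹ * B - 1 := by
        rw [Matrix.mul_sub, Matrix.nonsing_inv_mul A hAdet]
      rw [h1, Matrix.trace_sub, Matrix.trace_one, htraceC]
      simp
    -- determinant identity : A.det * C.det = B.det
    have hdet : A.det * C.det = B.det := by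
      have : C.det = S⁻¹.det * B.det * S⁻¹.det := by
        rw [hCdef, Matrix.det_mul, Matrix.det_mul]
      rw [this, Matrix.det_nonsing_inv, Ring.inverse_eq_inv', ← hSS, Matrix.det_mul]
      field_simp
    -- real/imag parts
    have hAre : 0 < A.det.re ∧ A.det.im = 0 := by
      have := hA.det_pos
      rw [Complex.lt_def] at this
      exact ⟨by simpa using this.1, by simpa using this.2.symm⟩
    have hCre : 0 < C.det.re ∧ C.det.im = 0 := by
      have := hC.det_pos
      rw [Complex.lt_def] at this
      exact ⟨by simpa using this.1, by simpa using this.2.symm⟩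
    have hBre : B.det.re = A.det.re * C.det.re := by
      rw [← hdet, Complex.mul_re, hAre.2, hCre.2]
      ring
    -- eigenvalues of C
    set lam := hC.1.eigenvalues with hlam
    have hlampos : ∀ i, 0 < lam i := hC.eigenvalues_pos
    have hCdet_eig : C.det.re = ∏ i, lam i := by
      have := hC.1.det_eq_prod_eigenvalues
      rw [this]
      norm_cast
    have hCtr_eig : C.trace.re = ∑ i, lam i := by
      rw [trace_eq_sum_eigenvalues_aux hC.1]
      norm_cast
    -- log computations
    rw [hBre, Real.log_mul hAre.1.ne' hCre.1.ne', htr, hCtr_eig,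
      hCdet_eig]
    have hlog : Real.log (∏ i, lam i) = ∑ i, Real.log (lam i) :=
      Real.log_prod (fun i _ => (hlampos i).ne')
    rw [hlog]
    have hle : ∑ i, Real.log (lam i) ≤ ∑ i, (lam i - 1) :=
      Finset.sum_le_sum fun i _ => Real.log_le_sub_one_of_pos (hlampos i)
    have : ∑ i, (lam i - 1) = (∑ i, lam i) - Fintype.card n := by
      rw [Finset.sum_sub_distrib]
      simp [Finset.card_univ]
    linarith [hle, this ▸ hle]
  · rintro rfl
    simp
end

section
/- Let S, J, J̄ be N×N complex Hermitian positive semidefinite matrices and set Y = I_N + J̄ (which is Hermitian positive definite). Then log(det(I_N + S + J)) − log(det(I_N + J)) ≥ log(det(I_N + S + J)) − Re(tr(Y⁻¹ J)) − log(det Y) + Re(tr(Y⁻¹ J̄)); equivalently log(det(I_N + J)) ≤ log(det Y) + Re(tr(Y⁻¹ (J − J̄))). Moreover equality holds when J = J̄. -/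
open Matrix
open scoped ComplexOrder

lemma aux_trace_eq_sum_eigenvalues {N : Type*} [Fintype N] [DecidableEq N]
    {A : Matrix N N ℂ} (hA : A.IsHermitian) :
    A.trace = ∑ i, (hA.eigenvalues i : ℂ) := by
  conv_lhs => rw [hA.spectral_theorem]
  rw [Unitary.conjStarAlgAut_apply, Matrix.trace_mul_comm, ← mul_assoc,
    (Matrix.mem_unitaryGroup_iff').mp (hA.eigenvectorUnitary).2, one_mul, trace_diagonal]
  simp

open scoped MatrixOrder in
lemma aux_logdet_le {N : Type*} [Fintype N] [DecidableEq N]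
    {A B : Matrix N N ℂ} (hA : A.PosDef) (hB : B.PosDef) :
    Real.log A.det.re ≤ Real.log B.det.re + ((B⁻¹ * A).trace).re - Fintype.card N := by
  have hR : (CFC.sqrt B⁻¹).PosSemidef := (CFC.sqrt_nonneg B⁻¹).posSemidef
  set R := CFC.sqrt B⁻¹ with hRdef
  have hRR : R * R = B⁻¹ := CFC.sqrt_mul_sqrt_self B⁻¹ hB.inv.posSemidef.nonneg
  set M := R * A * R with hMdef
  have hM : M.PosSemidef := by
    have := hA.posSemidef.mul_mul_conjTranspose_same R
    rwa [hR.isHermitian.eq] at this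
  -- real positive determinants
  have hAdet : A.det = (A.det.re : ℂ) := by
    have := hA.det_pos
    rw [Complex.lt_def] at this
    exact Complex.ext rfl (by simpa using this.2.symm)
  have hBdet : B.det = (B.det.re : ℂ) := by
    have := hB.det_pos
    rw [Complex.lt_def] at this
    exact Complex.ext rfl (by simpa using this.2.symm)
  have hApos : 0 < A.det.re := by
    have := hA.det_pos; rw [Complex.lt_def] at this; simpa using this.1
  have hBpos : 0 < B.det.re := by
    have := hB.det_pos; rw [Complex.lt_def] at this; simpa using this.1
  have hdetM : M.det = ((A.det.re / B.det.re : ℝ) : ℂ) := by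
    rw [hMdef, det_mul, det_mul]
    rw [show R.det * A.det * R.det = A.det * (R.det * R.det) by ring, ← det_mul, hRR,
      det_nonsing_inv, Ring.inverse_eq_inv', hAdet, hBdet, div_eq_mul_inv]
    push_cast
    simp
  have htrM : M.trace = (B⁻¹ * A).trace := by
    rw [hMdef, Matrix.trace_mul_comm, ← mul_assoc, hRR]
  -- eigenvalues
  set ε := hM.isHermitian.eigenvalues with hεdef
  have hprod : (∏ i, ε i) = A.det.re / B.det.re := by
    have := hM.isHermitian.det_eq_prod_eigenvalues
    rw [hdetM] at this
    have h2 := this.symm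
    push_cast at h2
    exact RCLike.ofReal_injective (K := ℂ) (by push_cast; exact h2)
  have hsum : ((B⁻¹ * A).trace).re = ∑ i, ε i := by
    rw [← htrM, aux_trace_eq_sum_eigenvalues hM.isHermitian]
    push_cast
    simp
    rfl
  have hεpos : ∀ i, 0 < ε i := by
    intro i
    rcases lt_or_eq_of_le (hM.eigenvalues_nonneg i) with h | h
    · exact h
    · exfalso
      have : (∏ j, ε j) = 0 := Finset.prod_eq_zero (Finset.mem_univ i) h.symm
      rw [hprod] at this
      exact (div_pos hApos hBpos).ne' this
  have hlog : Real.log (A.det.re / B.det.re) = ∑ i, Real.log (ε i) := by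
    rw [← hprod]
    exact Real.log_prod (fun i _ => (hεpos i).ne')
  have hle : ∑ i, Real.log (ε i) ≤ ∑ i, (ε i - 1) :=
    Finset.sum_le_sum (fun i _ => Real.log_le_sub_one_of_pos (hεpos i))
  have hsum1 : ∑ i, (ε i - 1) = (∑ i, ε i) - Fintype.card N := by
    rw [Finset.sum_sub_distrib]
    simp
  rw [Real.log_div hApos.ne' hBpos.ne'] at hlog
  rw [hsum]
  linarith [hle.trans_eq hsum1]

/-- SIN linearization of the interference term: for Hermitian PSD matrices
`S`, `J`, `J̄` with `Y = I + J̄`, the matrix `Y` is Hermitian positive definite,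
the convexified rate is a lower bound on the true rate
`log det (I + S + J) - log det (I + J)`, equivalently
`log det (I + J) ≤ log det Y + Re (tr (Y⁻¹ (J - J̄)))`,
and equality holds when `J = J̄`. -/
theorem sin_rate_underestimator {N : Type*} [Fintype N] [DecidableEq N]
    (S J Jbar : Matrix N N ℂ)
    (hS : S.PosSemidef) (hJ : J.PosSemidef) (hJbar : Jbar.PosSemidef)
    (Y : Matrix N N ℂ) (hY : Y = 1 + Jbar) :
    Y.PosDef ∧
    (Real.log ((1 + S + J).det.re) - ((Y⁻¹ * J).trace).re - Real.log (Y.det.re)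
        + ((Y⁻¹ * Jbar).trace).re ≤
      Real.log ((1 + S + J).det.re) - Real.log ((1 + J).det.re)) ∧
    (Real.log ((1 + J).det.re) ≤
      Real.log (Y.det.re) + ((Y⁻¹ * (J - Jbar)).trace).re) ∧
    (J = Jbar →
      Real.log ((1 + S + J).det.re) - ((Y⁻¹ * J).trace).re - Real.log (Y.det.re)
          + ((Y⁻¹ * Jbar).trace).re =
        Real.log ((1 + S + J).det.re) - Real.log ((1 + J).det.re)) := by
  have hYpd : Y.PosDef := hY ▸ Matrix.PosDef.one.add_posSemidef hJbar
  have hApd : (1 + J).PosDef := Matrix.PosDef.one.add_posSemidef hJ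
  have key := aux_logdet_le hApd hYpd
  have hinv : Y⁻¹ * Y = 1 := nonsing_inv_mul Y hYpd.det_pos.ne'.isUnit
  have hsub : J - Jbar = (1 + J) - Y := by rw [hY]; abel
  have h1 : Y⁻¹ * (J - Jbar) = Y⁻¹ * (1 + J) - 1 := by
    rw [hsub, Matrix.mul_sub, hinv]
  have h2 : ((Y⁻¹ * (J - Jbar)).trace).re = ((Y⁻¹ * (1 + J)).trace).re - Fintype.card N := by
    rw [h1, trace_sub, trace_one, Complex.sub_re]
    simp
  have main3 : Real.log ((1 + J).det.re) ≤
      Real.log (Y.det.re) + ((Y⁻¹ * (J - Jbar)).trace).re := by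
    rw [h2]; linarith
  have h3 : ((Y⁻¹ * (J - Jbar)).trace).re = ((Y⁻¹ * J).trace).re - ((Y⁻¹ * Jbar).trace).re := by
    rw [Matrix.mul_sub, trace_sub, Complex.sub_re]
  refine ⟨hYpd, ?_, main3, ?_⟩
  · rw [h3] at main3; linarith
  · intro h
    subst h
    rw [hY]
    ring
end

section
/- Global under-estimation of the true rates by the SIN convexified rates: fix i, k ∈ {1,…,K}, matrices M_{ik} ∈ ℂ^{N_i×m_k}, reference Hermitian PSD matrices Q̄_k ∈ ℂ^{m_k×m_k}, and define for each i the matrix Y_i = I_{N_i} + Σ_{k≠i} M_{ik} Q̄_k M_{ik}ᴴ (Hermitian positive definite). Then for every tuple of Hermitian PSD matrices Q_k ∈ ℂ^{m_k×m_k} and every i: log(det(I + Σ_k M_{ik} Q_k M_{ik}ᴴ)) − Σ_{k≠i} Re(tr(Y_i⁻¹ M_{ik} Q_k M_{ik}ᴴ)) − log(det Y_i) + Σ_{k≠i} Re(tr(Y_i⁻¹ M_{ik} Q̄_k M_{ik}ᴴ)) ≤ log(det(I + Σ_k M_{ik} Q_k M_{ik}ᴴ)) − log(det(I + Σ_{k≠i}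 M_{ik} Q_k M_{ik}ᴴ)), with equality when Q_k = Q̄_k for all k. -/
open Matrix
open scoped ComplexOrder

private lemma psd_sum {n ι : Type*} [Fintype n] (s : Finset ι) (f : ι → Matrix n n ℂ)
    (h : ∀ k ∈ s, (f k).PosSemidef) : (∑ k ∈ s, f k).PosSemidef :=
  Finset.sum_induction f _ (fun _ _ ha hb => ha.add hb) .zero h

private lemma trace_eq_sum_eigen {n : Type*} [Fintype n] [DecidableEq n] {A : Matrix n n ℂ}
    (hA : A.IsHermitian) : A.trace = ∑ i, (hA.eigenvalues i : ℂ) := by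
  conv_lhs => rw [hA.spectral_theorem]
  rw [Unitary.conjStarAlgAut_apply, Matrix.trace_mul_cycle, Unitary.coe_star_mul_self, one_mul, trace_diagonal]
  simp

private lemma logdet_concave {n : Type*} [Fintype n] [DecidableEq n] {A Y : Matrix n n ℂ}
    (hA : A.PosDef) (hY : Y.PosDef) :
    Real.log A.det.re ≤ Real.log Y.det.re + ((Y⁻¹ * A).trace.re - Fintype.card n) := by
  have hYi : (Y⁻¹).PosDef := hY.inv
  set T := (open scoped MatrixOrder in CFC.sqrt (Y⁻¹)) with hT
  have hTpsd : T.PosSemidef := by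
    open scoped MatrixOrder in exact Matrix.nonneg_iff_posSemidef.mp (CFC.sqrt_nonneg (Y⁻¹))
  have hTT : T * T = Y⁻¹ := by
    open scoped MatrixOrder in exact CFC.sqrt_mul_sqrt_self _ hYi.posSemidef.nonneg
  have hB : (T * A * T).PosSemidef := by
    have := hA.posSemidef.conjTranspose_mul_mul_same T
    rwa [hTpsd.isHermitian.eq] at this
  -- determinant facts
  have hAd := hA.det_pos
  have hYd := hY.det_pos
  have hYid := hYi.det_pos
  have hare : (0:ℝ) < A.det.re := (Complex.lt_def.mp hAd).1
  have hyre : (0:ℝ) < Y.det.re := (Complex.lt_def.mp hYd).1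
  have hAim : A.det.im = 0 := (Complex.lt_def.mp hAd).2.symm
  have hYim : Y.det.im = 0 := (Complex.lt_def.mp hYd).2.symm
  have hdetB : (T * A * T).det = A.det * (Y.det)⁻¹ := by
    rw [det_mul, det_mul, mul_comm T.det A.det, mul_assoc, ← det_mul, hTT,
      det_nonsing_inv, Ring.inverse_eq_inv]
  have hdetBre : (T * A * T).det.re = A.det.re / Y.det.re := by
    have hAc : A.det = (A.det.re : ℂ) := Complex.ext rfl (by simp [hAim])
    have hYc : Y.det = (Y.det.re : ℂ) := Complex.ext rfl (by simp [hYim])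
    rw [hdetB, hAc, hYc, ← Complex.ofReal_inv, ← Complex.ofReal_mul, Complex.ofReal_re,
      div_eq_mul_inv]
    simp
  -- eigenvalues of B
  set lam := hB.isHermitian.eigenvalues with hlam
  have hprod : (T * A * T).det = ∏ i, (lam i : ℂ) := hB.isHermitian.det_eq_prod_eigenvalues
  have hBdet_pos : (0:ℝ) < (T * A * T).det.re := by
    rw [hdetBre]; positivity
  have hlampos : ∀ i, 0 < lam i := by
    intro i
    rcases lt_or_eq_of_le (hB.eigenvalues_nonneg i) with h | h
    · exact h
    · exfalso
      have : (T * A * T).det = 0 := by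
        rw [hprod]
        exact Finset.prod_eq_zero (Finset.mem_univ i) (by exact_mod_cast h.symm)
      rw [this] at hBdet_pos; simp at hBdet_pos
  have hprodre : (T * A * T).det.re = ∏ i, lam i := by
    rw [hprod, ← Complex.ofReal_prod, Complex.ofReal_re]
  have htr : (T * A * T).trace = (Y⁻¹ * A).trace := by
    rw [Matrix.trace_mul_cycle, hTT]
  have htrre : (Y⁻¹ * A).trace.re = ∑ i, lam i := by
    rw [← htr, trace_eq_sum_eigen hB.isHermitian, Complex.re_sum]
    simp
    rfl
  -- the log inequality
  have key : Real.log ((T * A * T).det.re) ≤ (Y⁻¹ * A).trace.re - Fintype.card n := by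
    rw [hprodre, htrre, Real.log_prod (fun i _ => (hlampos i).ne')]
    have : (Fintype.card n : ℝ) = ∑ _i : n, (1:ℝ) := by simp
    rw [this, ← Finset.sum_sub_distrib]
    exact Finset.sum_le_sum fun i _ => Real.log_le_sub_one_of_pos (hlampos i)
  have hlogs : Real.log ((T * A * T).det.re) = Real.log A.det.re - Real.log Y.det.re := by
    rw [hdetBre, Real.log_div hare.ne' hyre.ne']
  linarith

/-- Global under-estimation of the true rates by the SIN convexified rates:
with reference Hermitian PSD covariances `Q̄ k` and
`Y i = I + ∑_{k ≠ i} M i k (Q̄ k) (M i k)ᴴ` (Hermitian positive definite), for every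
tuple of Hermitian PSD covariances `Q k` and every user `i`, the SIN convexified rate
is at most the true rate, with equality when `Q = Q̄`. -/
theorem sin_rate_global_underestimator {K : ℕ}
    (N m : Fin K → Type*) [∀ i, Fintype (N i)] [∀ i, DecidableEq (N i)]
    [∀ k, Fintype (m k)] [∀ k, DecidableEq (m k)]
    (M : ∀ i k : Fin K, Matrix (N i) (m k) ℂ)
    (Qbar : ∀ k : Fin K, Matrix (m k) (m k) ℂ)
    (hQbar : ∀ k, (Qbar k).PosSemidef)
    (Y : ∀ i : Fin K, Matrix (N i) (N i) ℂ)
    (hY : ∀ i, Y i = 1 + ∑ k ∈ Finset.univ.erase i, M i k * Qbar k * (M i k)ᴴ) :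
    (∀ i, (Y i).PosDef) ∧
    (∀ (Q : ∀ k : Fin K, Matrix (m k) (m k) ℂ), (∀ k, (Q k).PosSemidef) →
      ∀ i : Fin K,
        Real.log ((1 + ∑ k, M i k * Q k * (M i k)ᴴ).det.re) -
            (∑ k ∈ Finset.univ.erase i, (((Y i)⁻¹ * (M i k * Q k * (M i k)ᴴ)).trace).re) -
            Real.log ((Y i).det.re) +
            (∑ k ∈ Finset.univ.erase i, (((Y i)⁻¹ * (M i k * Qbar k * (M i k)ᴴ)).trace).re) ≤
          Real.log ((1 + ∑ k, M i k * Q k * (M i k)ᴴ).det.re) -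
            Real.log ((1 + ∑ k ∈ Finset.univ.erase i, M i k * Q k * (M i k)ᴴ).det.re)) ∧
    (∀ i : Fin K,
      Real.log ((1 + ∑ k, M i k * Qbar k * (M i k)ᴴ).det.re) -
          (∑ k ∈ Finset.univ.erase i, (((Y i)⁻¹ * (M i k * Qbar k * (M i k)ᴴ)).trace).re) -
          Real.log ((Y i).det.re) +
          (∑ k ∈ Finset.univ.erase i, (((Y i)⁻¹ * (M i k * Qbar k * (M i k)ᴴ)).trace).re) =
        Real.log ((1 + ∑ k, M i k * Qbar k * (M i k)ᴴ).det.re) -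
          Real.log ((1 + ∑ k ∈ Finset.univ.erase i, M i k * Qbar k * (M i k)ᴴ).det.re)) := by
  
  have hpd : ∀ (Q : ∀ k : Fin K, Matrix (m k) (m k) ℂ), (∀ k, (Q k).PosSemidef) → ∀ i,
      (1 + ∑ k ∈ Finset.univ.erase i, M i k * Q k * (M i k)ᴴ : Matrix (N i) (N i) ℂ).PosDef :=
    fun Q hQ i => Matrix.PosDef.add_posSemidef Matrix.PosDef.one
      (psd_sum _ _ fun k _ => (hQ k).mul_mul_conjTranspose_same (M i k))
  have hYpd : ∀ i, (Y i).PosDef := fun i => (hY i) ▸ hpd Qbar hQbar i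
  refine ⟨hYpd, ?_, ?_⟩
  · intro Q hQ i
    have hApd := hpd Q hQ i
    set A := 1 + ∑ k ∈ Finset.univ.erase i, M i k * Q k * (M i k)ᴴ with hA
    -- rewrite the sums of traces
    have hsum1 : (∑ k ∈ Finset.univ.erase i, (((Y i)⁻¹ * (M i k * Q k * (M i k)ᴴ)).trace).re) =
        ((Y i)⁻¹ * A).trace.re - ((Y i)⁻¹).trace.re := by
      rw [hA, mul_add, mul_one, Matrix.trace_add, Finset.mul_sum, Matrix.trace_sum,
        Complex.add_re, Complex.re_sum]
      ring
    have hsum2 : (∑ k ∈ Finset.univ.erase i, (((Y i)⁻¹ * (M i k * Qbar k * (M i k)ᴴ)).trace).re) =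
        (Fintype.card (N i) : ℝ) - ((Y i)⁻¹).trace.re := by
      have hmul : (Y i)⁻¹ * Y i = (Y i)⁻¹ +
          ∑ k ∈ Finset.univ.erase i, (Y i)⁻¹ * (M i k * Qbar k * (M i k)ᴴ) := by
        nth_rewrite 2 [hY i]
        rw [mul_add, mul_one, Finset.mul_sum]
      have hinv : (Y i)⁻¹ * Y i = 1 :=
        Matrix.nonsing_inv_mul _ (hYpd i).det_pos.ne'.isUnit
      have heq := hmul.symm.trans hinv
      have htr := congrArg (fun X : Matrix (N i) (N i) ℂ => X.trace.re) heq
      simp only [Matrix.trace_add, Matrix.trace_sum, Complex.add_re, Complex.re_sum,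
        Matrix.trace_one, Complex.natCast_re] at htr
      linarith
    have hcore := logdet_concave hApd (hYpd i)
    linarith
  · intro i
    rw [← hY i]
    ring
end

section
/- Proposition 1 (SIN outperforms any interference-free linear precoder): fix i, k ∈ {1,…,K}, effective channel matrices M_{ik} ∈ ℂ^{N_i×m_k}, power-constraint matrices A_{jk} ∈ ℂ^{m_k×m_k} for j ∈ {1,…,B}, and budgets P_j ≥ 0. Call a tuple Q = (Q_k) feasible if each Q_k is Hermitian positive semidefinite and Σ_k Re(tr(A_{jk} Q_k A_{jk}ᴴ)) ≤ P_j for every j. Define the true rate R_i(Q) = log(det(I + Σ_k M_{ik} Q_k M_{ik}ᴴ)) − log(det(I + Σ_{k≠i} M_{ik} Q_k M_{ik}ᴴ)) and the convexified rate R̃_i(Q) = log(det(I + Σ_k M_{ik} Q_k M_{ik}ᴴ)) − Σ_{k≠i} Re(tr(M_{ik} Q_k M_{ik}ᴴ)). Let U : ℝ^K → ℝ be nondecreasing with respect to the componentwise order. Suppose Q* is feasible and maximizes U(R̃(·)) over all feasible tuples. Then for every feasible tuple Q̂ satisfying the interference-free condition Σ_{k≠i} M_{ik} Q̂_k M_{ik}ᴴ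 = 0 for all i, one has U(R(Q*)) ≥ U(R(Q̂)). -/
open Matrix
open scoped ComplexOrder

lemma herm_trace_eq_sum_eigenvalues {n : Type*} [Fintype n] [DecidableEq n]
    {J : Matrix n n ℂ} (hJ : J.IsHermitian) :
    J.trace = ∑ i, (hJ.eigenvalues i : ℂ) := by
  conv_lhs => rw [hJ.spectral_theorem]
  rw [Unitary.conjStarAlgAut_apply, trace_mul_cycle,
    show star (hJ.eigenvectorUnitary : Matrix n n ℂ) * hJ.eigenvectorUnitary = 1 from
      hJ.eigenvectorUnitary.2.1, one_mul, trace_diagonal]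
  simp

lemma log_det_one_add_le_trace {n : Type*} [Fintype n] [DecidableEq n]
    {J : Matrix n n ℂ} (hJ : J.PosSemidef) :
    Real.log ((1 + J).det.re) ≤ J.trace.re := by
  have hH : (1 + J).PosDef := Matrix.PosDef.add_posSemidef Matrix.PosDef.one hJ
  have hdetre : (1 + J).det.re = ∏ i, hH.isHermitian.eigenvalues i := by
    rw [hH.isHermitian.det_eq_prod_eigenvalues]
    norm_cast
  have htr : J.trace.re = (∑ i, hH.isHermitian.eigenvalues i) - Fintype.card n := by
    have h1 : (1 + J).trace = (Fintype.card n : ℂ) + J.trace := by simp [trace_add]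
    have h2 := herm_trace_eq_sum_eigenvalues hH.isHermitian
    rw [h1] at h2
    have h3 : J.trace = (∑ i, (hH.isHermitian.eigenvalues i : ℂ)) - Fintype.card n := by
      linear_combination h2
    rw [h3]
    norm_cast
  rw [hdetre, htr, Real.log_prod (fun i _ => (hH.eigenvalues_pos i).ne'),
    show ((Fintype.card n : ℝ)) = ∑ _i : n, (1:ℝ) by simp, ← Finset.sum_sub_distrib]
  exact Finset.sum_le_sum fun i _ => Real.log_le_sub_one_of_pos (hH.eigenvalues_pos i)

/-- Proposition 1 (SIN outperforms any interference-free linear precoder):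
`feasible` tuples are Hermitian PSD covariances meeting the per-base power
constraints; `R` is the true rate and `Rt` the SIN convexified rate of the initial
iteration (reference `Q̄ = 0`, so `Y i = I`). If `U` is nondecreasing (componentwise)
and `Q*` is a feasible maximizer of `U ∘ Rt` over feasible tuples, then for every
feasible interference-free tuple `Q̂`, `U (R Q*) ≥ U (R Q̂)`. -/
theorem sin_outperforms_interference_free {K B : ℕ}
    (N m : Fin K → Type*) [∀ i, Fintype (N i)] [∀ i, DecidableEq (N i)]
    [∀ k, Fintype (m k)] [∀ k, DecidableEq (m k)]
    (M : ∀ i k : Fin K, Matrix (N i) (m k) ℂ)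
    (A : ∀ (_ : Fin B) (k : Fin K), Matrix (m k) (m k) ℂ)
    (P : Fin B → ℝ) (hP : ∀ j, 0 ≤ P j)
    (U : (Fin K → ℝ) → ℝ) (hU : Monotone U)
    (feasible : (∀ k : Fin K, Matrix (m k) (m k) ℂ) → Prop)
    (hfeasible : ∀ Q, feasible Q ↔
      (∀ k, (Q k).PosSemidef) ∧
      ∀ j : Fin B, ∑ k, ((A j k * Q k * (A j k)ᴴ).trace).re ≤ P j)
    (R Rt : (∀ k : Fin K, Matrix (m k) (m k) ℂ) → Fin K → ℝ)
    (hR : ∀ Q i, R Q i =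
      Real.log ((1 + ∑ k, M i k * Q k * (M i k)ᴴ).det.re) -
        Real.log ((1 + ∑ k ∈ Finset.univ.erase i, M i k * Q k * (M i k)ᴴ).det.re))
    (hRt : ∀ Q i, Rt Q i =
      Real.log ((1 + ∑ k, M i k * Q k * (M i k)ᴴ).det.re) -
        ∑ k ∈ Finset.univ.erase i, ((M i k * Q k * (M i k)ᴴ).trace).re)
    (Qstar : ∀ k : Fin K, Matrix (m k) (m k) ℂ)
    (hQstar : feasible Qstar)
    (hmax : ∀ Q, feasible Q → U (Rt Q) ≤ U (Rt Qstar))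
    (Qhat : ∀ k : Fin K, Matrix (m k) (m k) ℂ)
    (hQhat : feasible Qhat)
    (hfree : ∀ i, ∑ k ∈ Finset.univ.erase i, M i k * Qhat k * (M i k)ᴴ = 0) :
    U (R Qhat) ≤ U (R Qstar) := by
  have hQs := ((hfeasible Qstar).mp hQstar).1
  -- each interference matrix is PSD
  have hPSD : ∀ (Q : ∀ k : Fin K, Matrix (m k) (m k) ℂ), (∀ k, (Q k).PosSemidef) →
      ∀ i : Fin K, (∑ k ∈ Finset.univ.erase i, M i k * Q k * (M i k)ᴴ).PosSemidef := by
    intro Q hQ i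
    refine Finset.sum_induction _ _ (fun a b ha hb => ha.add hb) Matrix.PosSemidef.zero ?_
    exact fun k _ => (hQ k).mul_mul_conjTranspose_same (M i k)
  -- R Qhat = Rt Qhat
  have h1 : R Qhat = Rt Qhat := by
    funext i
    rw [hR, hRt]
    have e2 : ∑ k ∈ Finset.univ.erase i, ((M i k * Qhat k * (M i k)ᴴ).trace).re
        = ((∑ k ∈ Finset.univ.erase i, M i k * Qhat k * (M i k)ᴴ).trace).re := by
      rw [trace_sum, Complex.re_sum]
    rw [e2, hfree i, add_zero, det_one]
    norm_num
  -- Rt Qstar ≤ R Qstar pointwise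
  have h2 : Rt Qstar ≤ R Qstar := by
    intro i
    rw [hR, hRt]
    have hsum : ∑ k ∈ Finset.univ.erase i, ((M i k * Qstar k * (M i k)ᴴ).trace).re
        = ((∑ k ∈ Finset.univ.erase i, M i k * Qstar k * (M i k)ᴴ).trace).re := by
      rw [trace_sum, Complex.re_sum]
    have := log_det_one_add_le_trace (hPSD Qstar hQs i)
    rw [hsum]
    linarith
  calc U (R Qhat) = U (Rt Qhat) := by rw [h1]
    _ ≤ U (Rt Qstar) := hmax Qhat hQhat
    _ ≤ U (R Qstar) := hU h2
end

section
/- Monotone improvement of the SIN iteration: fix i, k ∈ {1,…,K}, effective channel matrices M_{ik} ∈ ℂ^{N_i×m_k}, power-constraint matrices A_{jk} ∈ ℂ^{m_k×m_k} and budgets P_j ≥ 0, with feasibility of a tuple Q = (Q_k) meaning each Q_k is Hermitian PSD and Σ_k Re(tr(A_{jk} Q_k A_{jk}ᴴ)) ≤ P_j for every j. Let Q̄ be feasible, set Y_i = I + Σ_{k≠i} M_{ik} Q̄_k M_{ik}ᴴ, and define R̃_i(Q) = log(det(I + Σ_k M_{ik} Q_k M_{ik}ᴴ)) − Σ_{k≠i}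 Re(tr(Y_i⁻¹ M_{ik} Q_k M_{ik}ᴴ)) − log(det Y_i) + Σ_{k≠i} Re(tr(Y_i⁻¹ M_{ik} Q̄_k M_{ik}ᴴ)), and the true rate R_i(Q) = log(det(I + Σ_k M_{ik} Q_k M_{ik}ᴴ)) − log(det(I + Σ_{k≠i} M_{ik} Q_k M_{ik}ᴴ)). Let U : ℝ^K → ℝ be nondecreasing with respect to the componentwise order. If Q* is feasible and maximizes U(R̃(·)) over all feasible tuples, then U(R(Q*)) ≥ U(R(Q̄)); i.e., the true utility is nondecreasing from one SIN iteration to the next. -/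
open Matrix
open scoped ComplexOrder
open scoped MatrixOrder

/-- A positive-definite complex matrix has real positive determinant. -/
lemma det_re_of_posDef {n : Type*} [Fintype n] [DecidableEq n]
    {X : Matrix n n ℂ} (hX : X.PosDef) :
    X.det = (X.det.re : ℂ) ∧ 0 < X.det.re := by
  have h := hX.det_pos
  rw [Complex.lt_def] at h
  exact ⟨Complex.ext rfl (by simpa using h.2.symm), by simpa using h.1⟩

/-- trace of a Hermitian matrix is the sum of its eigenvalues -/
lemma trace_eq_sum_eig {n : Type*} [Fintype n] [DecidableEq n]
    {Z : Matrix n n ℂ} (hZ : Z.IsHermitian) :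
    Z.trace = ∑ i, (hZ.eigenvalues i : ℂ) := by
  conv_lhs => rw [hZ.spectral_theorem]
  rw [Unitary.conjStarAlgAut_apply, trace_mul_cycle, Unitary.coe_star_mul_self, one_mul, trace_diagonal]
  simp

/-- Key concavity inequality: log det X ≤ log det Y + Re tr(Y⁻¹ X) − n. -/
lemma logdet_key {n : Type*} [Fintype n] [DecidableEq n]
    {X Y : Matrix n n ℂ} (hX : X.PosDef) (hY : Y.PosDef) :
    Real.log X.det.re ≤
      Real.log Y.det.re + ((Y⁻¹ * X).trace).re - Fintype.card n := by
  set S := CFC.sqrt Y with hSdef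
  have hSH : S.IsHermitian := (CFC.sqrt_nonneg Y).posSemidef.isHermitian
  have hSS : S * S = Y := CFC.sqrt_mul_sqrt_self Y hY.posSemidef.nonneg
  have hYdet : Y.det ≠ 0 := hY.det_pos.ne'
  have hSdetne : S.det ≠ 0 := by
    intro h
    apply hYdet
    rw [← hSS, det_mul, h, zero_mul]
  have hSinvH : (S⁻¹).IsHermitian := hSH.inv
  set Z := S⁻¹ * X * S⁻¹ with hZdef
  have hZps : Z.PosSemidef := by
    have := hX.posSemidef.mul_mul_conjTranspose_same S⁻¹
    rwa [hSinvH.eq] at this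
  have hZH := hZps.isHermitian
  -- determinant of Z
  have hdetZ : Z.det = X.det * (Y.det)⁻¹ := by
    rw [hZdef, det_mul, det_mul, det_nonsing_inv, Ring.inverse_eq_inv, ← hSS, det_mul,
      mul_inv]
    ring
  -- real parts
  obtain ⟨hXr, hXpos⟩ := det_re_of_posDef hX
  obtain ⟨hYr, hYpos⟩ := det_re_of_posDef hY
  set μ := hZH.eigenvalues with hμdef
  have hprodC : Z.det = ((∏ i, μ i : ℝ) : ℂ) := by
    rw [hZH.det_eq_prod_eigenvalues]; push_cast; rfl
  have hprod_eq : (∏ i, μ i) = X.det.re / Y.det.re := by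
    have := hdetZ
    rw [hprodC, hXr, hYr] at this
    have : ((∏ i, μ i : ℝ) : ℂ) = ((X.det.re / Y.det.re : ℝ) : ℂ) := by
      rw [this]; push_cast; ring
    exact_mod_cast this
  have hprodpos : 0 < ∏ i, μ i := by
    rw [hprod_eq]; positivity
  have hμpos : ∀ i, 0 < μ i := by
    intro i
    rcases (hZps.eigenvalues_nonneg i).lt_or_eq with h | h
    · exact h
    · exfalso
      exact hprodpos.ne' (Finset.prod_eq_zero (Finset.mem_univ i) h.symm)
  -- trace of Z
  have htrZ : (Z.trace).re = ∑ i, μ i := by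
    rw [trace_eq_sum_eig hZH]
    push_cast
    simp [μ]
  have htrYX : (Y⁻¹ * X).trace = Z.trace := by
    rw [← hSS, Matrix.mul_inv_rev, hZdef, mul_assoc, trace_mul_comm]
  -- the scalar inequality
  have hlog : Real.log (∏ i, μ i) ≤ (∑ i, μ i) - Fintype.card n := by
    rw [Real.log_prod (fun i _ => (hμpos i).ne')]
    calc ∑ i, Real.log (μ i) ≤ ∑ i, (μ i - 1) :=
          Finset.sum_le_sum fun i _ => Real.log_le_sub_one_of_pos (hμpos i)
      _ = (∑ i, μ i) - Fintype.card n := by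
          rw [Finset.sum_sub_distrib]; simp
  have hsplit : Real.log X.det.re = Real.log Y.det.re + Real.log (∏ i, μ i) := by
    have : X.det.re = Y.det.re * (∏ i, μ i) := by
      rw [hprod_eq]; field_simp
    rw [this, Real.log_mul hYpos.ne' hprodpos.ne']
  rw [hsplit, htrYX, htrZ]
  linarith

lemma posdef_one_add_sum {n ι : Type*} [Fintype n] [DecidableEq n]
    (s : Finset ι) (f : ι → Matrix n n ℂ) (hf : ∀ k ∈ s, (f k).PosSemidef) :
    (1 + ∑ k ∈ s, f k).PosDef :=
  Matrix.PosDef.add_posSemidef Matrix.PosDef.one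
    (Finset.sum_induction f _ (fun _ _ ha hb => ha.add hb) Matrix.PosSemidef.zero hf)

/-- Monotone improvement of the SIN iteration: with `Q̄` feasible,
`Y i = I + ∑_{k ≠ i} M i k (Q̄ k) (M i k)ᴴ`, `Rt` the SIN convexified rate obtained
by linearizing the interference log-determinant around `Q̄`, and `R` the true rate,
if `U` is nondecreasing (componentwise) and `Q*` is a feasible maximizer of
`U ∘ Rt` over feasible tuples, then `U (R Q*) ≥ U (R Q̄)`. -/
theorem sin_iteration_monotone_improvement {K B : ℕ}
    (N m : Fin K → Type*) [∀ i, Fintype (N i)] [∀ i, DecidableEq (N i)]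
    [∀ k, Fintype (m k)] [∀ k, DecidableEq (m k)]
    (M : ∀ i k : Fin K, Matrix (N i) (m k) ℂ)
    (A : ∀ (_ : Fin B) (k : Fin K), Matrix (m k) (m k) ℂ)
    (P : Fin B → ℝ) (hP : ∀ j, 0 ≤ P j)
    (U : (Fin K → ℝ) → ℝ) (hU : Monotone U)
    (feasible : (∀ k : Fin K, Matrix (m k) (m k) ℂ) → Prop)
    (hfeasible : ∀ Q, feasible Q ↔
      (∀ k, (Q k).PosSemidef) ∧
      ∀ j : Fin B, ∑ k, ((A j k * Q k * (A j k)ᴴ).trace).re ≤ P j)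
    (Qbar : ∀ k : Fin K, Matrix (m k) (m k) ℂ)
    (hQbar : feasible Qbar)
    (Y : ∀ i : Fin K, Matrix (N i) (N i) ℂ)
    (hY : ∀ i, Y i = 1 + ∑ k ∈ Finset.univ.erase i, M i k * Qbar k * (M i k)ᴴ)
    (R Rt : (∀ k : Fin K, Matrix (m k) (m k) ℂ) → Fin K → ℝ)
    (hR : ∀ Q i, R Q i =
      Real.log ((1 + ∑ k, M i k * Q k * (M i k)ᴴ).det.re) -
        Real.log ((1 + ∑ k ∈ Finset.univ.erase i, M i k * Q k * (M i k)ᴴ).det.re))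
    (hRt : ∀ Q i, Rt Q i =
      Real.log ((1 + ∑ k, M i k * Q k * (M i k)ᴴ).det.re) -
        (∑ k ∈ Finset.univ.erase i, (((Y i)⁻¹ * (M i k * Q k * (M i k)ᴴ)).trace).re) -
        Real.log ((Y i).det.re) +
        (∑ k ∈ Finset.univ.erase i, (((Y i)⁻¹ * (M i k * Qbar k * (M i k)ᴴ)).trace).re))
    (Qstar : ∀ k : Fin K, Matrix (m k) (m k) ℂ)
    (hQstar : feasible Qstar)
    (hmax : ∀ Q, feasible Q → U (Rt Q) ≤ U (Rt Qstar)) :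
    U (R Qbar) ≤ U (R Qstar) := by
  have hpsd_bar : ∀ k, (Qbar k).PosSemidef := ((hfeasible Qbar).mp hQbar).1
  have hpsd_star : ∀ k, (Qstar k).PosSemidef := ((hfeasible Qstar).mp hQstar).1
  have hYpd : ∀ i, (Y i).PosDef := fun i => by
    rw [hY i]
    exact posdef_one_add_sum _ _ fun k _ => (hpsd_bar k).mul_mul_conjTranspose_same _
  have hXpd : ∀ i, (1 + ∑ k ∈ Finset.univ.erase i,
      M i k * Qstar k * (M i k)ᴴ).PosDef := fun i =>
    posdef_one_add_sum _ _ fun k _ => (hpsd_star k).mul_mul_conjTranspose_same _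
  -- equality at Qbar
  have hRtbar : Rt Qbar = R Qbar := funext fun i => by
    rw [hRt, hR, ← hY]; ring
  -- Rt Qstar ≤ R Qstar componentwise
  have hle : Rt Qstar ≤ R Qstar := by
    intro i
    have hsum : ∀ Q : ∀ k : Fin K, Matrix (m k) (m k) ℂ,
        (∑ k ∈ Finset.univ.erase i, (((Y i)⁻¹ * (M i k * Q k * (M i k)ᴴ)).trace).re) =
        (((Y i)⁻¹ * (1 + ∑ k ∈ Finset.univ.erase i,
          M i k * Q k * (M i k)ᴴ)).trace).re - (((Y i)⁻¹).trace).re := by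
      intro Q
      rw [mul_add, mul_one, trace_add, Complex.add_re, Finset.mul_sum, trace_sum,
        Complex.re_sum]
      ring
    have hbar : (∑ k ∈ Finset.univ.erase i,
        (((Y i)⁻¹ * (M i k * Qbar k * (M i k)ᴴ)).trace).re) =
        (Fintype.card (N i) : ℝ) - (((Y i)⁻¹).trace).re := by
      rw [hsum Qbar, ← hY i, Matrix.nonsing_inv_mul _ (hYpd i).det_pos.ne'.isUnit,
        trace_one]
      simp
    have key := logdet_key (hXpd i) (hYpd i)
    rw [hRt, hR, hsum Qstar, hbar]
    linarith
  calc U (R Qbar) = U (Rt Qbar) := by rw [hRtbar]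
    _ ≤ U (Rt Qstar) := hmax Qbar hQbar
    _ ≤ U (R Qstar) := hU hle
end
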